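/- Let t_0 = 0 and (t_k)_{k≥1} arbitrary reals, set x_k = 1 + t_{k-1}, y_k = t_k. Define the shifted tridiagonal determinants B_{ℓ-1}(m) by B_0(m) = y_{m+1}, B_1(m) = x_{m+3}·y_{m+1} − x_{m+1}·y_{m+2}, and B_ℓ(m) = x_{m+ℓ+2}·B_{ℓ-1}(m) − y_{m+ℓ+1}·B_{ℓ-2}(m) for ℓ ≥ 2. Then for all ℓ ≥ 2 and m ≥ 0, B_{ℓ-1}(m) = t_{m+1} − (1 + t_m − t_{m+1})·t_{m+2}·A_{ℓ-2}(m+3), where A_k(m) = 1 + Σ_{r=1}^{k} t_m·t_{m+1}···t_{m+r-1} (with A_0(m) = 1). -/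
import Mathlib


/-- Let `t 0 = 0`, `x k = 1 + t (k-1)`, `y k = t k`, and let the shifted
B-determinants satisfy `B 0 m = y (m+1)`,
`B 1 m = x (m+3) * y (m+1) - x (m+1) * y (m+2)`, and
`B (ℓ+2) m = x (m+ℓ+4) * B (ℓ+1) m - y (m+ℓ+3) * B ℓ m`.
Then for all `ℓ ≥ 2` and `m ≥ 0`:
`B (ℓ-1) m = t (m+1) − (1 + t m − t (m+1)) ⬝ t (m+2) ⬝ A (ℓ-2) (m+3)`,
where `A k m = 1 + Σ_{r=1}^{k} t m ⋯ t (m+r-1)`. -/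
theorem B_shifted_eq (t x y : ℕ → ℝ) (ht0 : t 0 = 0)
    (hx : ∀ k, x k = 1 + t (k - 1)) (hy : ∀ k, y k = t k)
    (B : ℕ → ℕ → ℝ)
    (hB0 : ∀ m, B 0 m = y (m + 1))
    (hB1 : ∀ m, B 1 m = x (m + 3) * y (m + 1) - x (m + 1) * y (m + 2))
    (hBrec : ∀ ℓ m, B (ℓ + 2) m = x (m + ℓ + 4) * B (ℓ + 1) m - y (m + ℓ + 3) * B ℓ m)
    (ℓ m : ℕ) (hℓ : 2 ≤ ℓ) :
    B (ℓ - 1) m = t (m + 1) - (1 + t m - t (m + 1)) * t (m + 2) *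
      (1 + ∑ r ∈ Finset.Icc 1 (ℓ - 2), ∏ j ∈ Finset.range r, t (m + 3 + j)) := by
  set A : ℕ → ℝ := fun k => 1 + ∑ r ∈ Finset.Icc 1 k, ∏ j ∈ Finset.range r, t (m + 3 + j)
    with hA
  have hAsucc : ∀ k, A (k + 1) = A k + ∏ j ∈ Finset.range (k + 1), t (m + 3 + j) := by
    intro k
    simp only [hA]
    rw [Finset.sum_Icc_succ_top (by omega : 1 ≤ k + 1)]
    ring
  have key : ∀ n, B (n + 1) m = t (m + 1) - (1 + t m - t (m + 1)) * t (m + 2) * A n := by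
    intro n
    induction n using Nat.twoStepInduction with
    | zero =>
      rw [hB1]
      simp only [hx, hy, hA]
      rw [show Finset.Icc 1 0 = ∅ from rfl]
      norm_num
      ring
    | one =>
      rw [show (1:ℕ) + 1 = 0 + 2 from rfl, hBrec, hB0, hB1]
      simp only [hx, hy, hA]
      rw [show Finset.Icc 1 1 = {1} from rfl]
      norm_num
      ring
    | more n ih1 ih2 =>
      have h : B (n + 2 + 1) m
          = x (m + (n + 1) + 4) * B (n + 1 + 1) m - y (m + (n + 1) + 3) * B (n + 1) m := by
        rw [show n + 2 + 1 = (n + 1) + 2 by ring]; exact hBrec (n + 1) m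
      have hp : (∏ j ∈ Finset.range (n + 1 + 1), t (m + 3 + j))
          = (∏ j ∈ Finset.range (n + 1), t (m + 3 + j)) * t (m + 3 + (n + 1)) :=
        Finset.prod_range_succ _ _
      rw [h, ih1, ih2, hx, hy,
        show m + (n + 1) + 4 - 1 = m + 3 + (n + 1) by omega,
        show m + (n + 1) + 3 = m + 3 + (n + 1) by ring,
        hAsucc (n + 1), hp, hAsucc n]
      ring
  obtain ⟨n, rfl⟩ := Nat.exists_eq_add_of_le hℓ
  have h1 : 2 + n - 1 = n + 1 := by omega
  have h2 : 2 + n - 2 = n := by omega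
  rw [h1, h2, key n]
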